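/- Let η: I_A → RL and ε̃: RL → I_A be natural transformations, and θ := Lε̃R · LηR : LR → LR. Let K be an ideal class of LR-comodule morphisms containing Lε̃_{R(B)} for each B. If (B, ω) is a K-cofirm non-counital LR-comodule, then there exists a unique ϱ: LR(B) → B in K making (B, ϱ, ω) a Frobenius bimodule; moreover, any LR-comodule morphism between two K-cofirm comodules is automatically a morphism of the induced Frobenius bimodules. -/

import Mathlib

open CategoryTheory

universe v₁ u₁ v₂ u₂

section

variable {A : Type u₁} [Category.{v₁} A] {B : Type u₂} [Category.{v₂} B]

/-- A non-counital comodule over the comonad `(LR, LηR)`. -/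
structure LRComod (L : A ⥤ B) (R : B ⥤ A) (η : 𝟭 A ⟶ L ⋙ R) where
  pt : B
  co : pt ⟶ L.obj (R.obj pt)
  coassoc : co ≫ L.map (R.map co) = co ≫ L.map (η.app (R.obj pt))

def IsLRComodHom {L : A ⥤ B} {R : B ⥤ A} {η : 𝟭 A ⟶ L ⋙ R}
    (X Y : LRComod L R η) (f : X.pt ⟶ Y.pt) : Prop :=
  X.co ≫ L.map (R.map f) = f ≫ Y.co

/-- The cofree comodule `(LR(X), LηR_X)`. -/
def cofreeLR (L : A ⥤ B) (R : B ⥤ A) (η : 𝟭 A ⟶ L ⋙ R) (X : B) : LRComod L R η where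
  pt := L.obj (R.obj X)
  co := L.map (η.app (R.obj X))
  coassoc := by
    rw [← L.map_comp, ← L.map_comp]
    congr 1
    have h := η.naturality (η.app (R.obj X))
    simp only [Functor.id_map, Functor.comp_map] at h
    exact h.symm

section Helpers

variable {L : A ⥤ B} {R : B ⥤ A} {η : 𝟭 A ⟶ L ⋙ R} {εt : L ⋙ R ⟶ 𝟭 A}

lemma myHomComp {X Y Z : LRComod L R η} {f : X.pt ⟶ Y.pt} {g : Y.pt ⟶ Z.pt}
    (hf : IsLRComodHom X Y f) (hg : IsLRComodHom Y Z g) :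
    IsLRComodHom X Z (f ≫ g) := by
  unfold IsLRComodHom at *
  rw [R.map_comp, L.map_comp, ← Category.assoc, hf, Category.assoc, hg, ← Category.assoc]

lemma myCoHom (X : LRComod L R η) : IsLRComodHom X (cofreeLR L R η X.pt) X.co :=
  X.coassoc

lemma myMapHom {X Y : B} (f : X ⟶ Y) :
    IsLRComodHom (cofreeLR L R η X) (cofreeLR L R η Y) (L.map (R.map f)) := by
  show L.map (η.app (R.obj X)) ≫ L.map (R.map (L.map (R.map f)))
      = L.map (R.map f) ≫ L.map (η.app (R.obj Y))
  rw [← L.map_comp, ← L.map_comp]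
  congr 1
  exact (η.naturality (R.map f)).symm

lemma myEtNatA {P Q : A} (εt : L ⋙ R ⟶ 𝟭 A) (g : P ⟶ Q) :
    R.map (L.map g) ≫ εt.app Q = εt.app P ≫ g :=
  εt.naturality g

lemma myEtaNatA {P Q : A} (η : 𝟭 A ⟶ L ⋙ R) (g : P ⟶ Q) :
    η.app P ≫ R.map (L.map g) = g ≫ η.app Q :=
  (η.naturality g).symm

lemma myEtHom (εt : L ⋙ R ⟶ 𝟭 A) (X : B) :
    IsLRComodHom (cofreeLR L R η (L.obj (R.obj X))) (cofreeLR L R η X)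
      (L.map (εt.app (R.obj X))) := by
  show L.map (η.app (R.obj (L.obj (R.obj X)))) ≫ L.map (R.map (L.map (εt.app (R.obj X))))
      = L.map (εt.app (R.obj X)) ≫ L.map (η.app (R.obj X))
  rw [← L.map_comp, ← L.map_comp]
  congr 1
  exact (η.naturality (εt.app (R.obj X))).symm

/-- Uniqueness of fillers coming from the `K`-cofirm (equaliser) property. -/
lemma myUnique
    (K : ∀ X Y : LRComod L R η, (X.pt ⟶ Y.pt) → Prop)
    (Kideal : ∀ (X Y Z : LRComod L R η) (f : X.pt ⟶ Y.pt) (g : Y.pt ⟶ Z.pt),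
      IsLRComodHom X Y f → IsLRComodHom Y Z g → (K X Y f ∨ K Y Z g) → K X Z (f ≫ g))
    (B₀ : LRComod L R η)
    (hU : ∀ (Q : LRComod L R η) (h : Q.pt ⟶ L.obj (R.obj B₀.pt)),
        IsLRComodHom Q (cofreeLR L R η B₀.pt) h →
        K Q (cofreeLR L R η B₀.pt) h →
        h ≫ L.map (η.app (R.obj B₀.pt)) = h ≫ L.map (R.map B₀.co) →
        ∃ q : Q.pt ⟶ B₀.pt,
          (IsLRComodHom Q B₀ q ∧ K Q B₀ q ∧ q ≫ B₀.co = h) ∧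
          ∀ q', (IsLRComodHom Q B₀ q' ∧ K Q B₀ q' ∧ q' ≫ B₀.co = h) → q' = q)
    (Q : LRComod L R η) (q₁ q₂ : Q.pt ⟶ B₀.pt)
    (h₁ : IsLRComodHom Q B₀ q₁) (h₂ : IsLRComodHom Q B₀ q₂)
    (k₁ : K Q B₀ q₁) (k₂ : K Q B₀ q₂)
    (e : q₁ ≫ B₀.co = q₂ ≫ B₀.co) : q₁ = q₂ := by
  obtain ⟨q, -, huniq⟩ := hU Q (q₁ ≫ B₀.co)
    (myHomComp h₁ (myCoHom B₀))
    (Kideal Q B₀ (cofreeLR L R η B₀.pt) q₁ B₀.co h₁ (myCoHom B₀) (Or.inl k₁))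
    (by rw [Category.assoc, Category.assoc, B₀.coassoc])
  rw [huniq q₁ ⟨h₁, k₁, rfl⟩, huniq q₂ ⟨h₂, k₂, e.symm⟩]

end Helpers

/-- Given `η : I → RL`, `ε̃ : RL → I` and an ideal class `K` of
`LR`-comodule morphisms containing each `Lε̃_{R(X)}`, every `K`-cofirm
non-counital `LR`-comodule extends by a unique `ϱ` in `K` to a Frobenius
bimodule, and comodule morphisms between `K`-cofirm comodules are morphisms of
the induced Frobenius bimodules. -/
theorem cofirm_comodule_extends_to_frobenius
    (L : A ⥤ B) (R : B ⥤ A) (η : 𝟭 A ⟶ L ⋙ R) (εt : L ⋙ R ⟶ 𝟭 A)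
    (K : ∀ X Y : LRComod L R η, (X.pt ⟶ Y.pt) → Prop)
    (Kideal : ∀ (X Y Z : LRComod L R η) (f : X.pt ⟶ Y.pt) (g : Y.pt ⟶ Z.pt),
      IsLRComodHom X Y f → IsLRComodHom Y Z g → (K X Y f ∨ K Y Z g) → K X Z (f ≫ g))
    (Kεt : ∀ X : B,
      K (cofreeLR L R η (L.obj (R.obj X))) (cofreeLR L R η X) (L.map (εt.app (R.obj X)))) :
    -- (1) unique ϱ in K making a Frobenius bimodule
    (∀ B₀ : LRComod L R η,
      -- (B₀, B₀.co) is K-cofirm: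
      (K B₀ (cofreeLR L R η B₀.pt) B₀.co ∧
        ∀ (Q : LRComod L R η) (h : Q.pt ⟶ L.obj (R.obj B₀.pt)),
          IsLRComodHom Q (cofreeLR L R η B₀.pt) h →
          K Q (cofreeLR L R η B₀.pt) h →
          h ≫ L.map (η.app (R.obj B₀.pt)) = h ≫ L.map (R.map B₀.co) →
          ∃ q : Q.pt ⟶ B₀.pt,
            (IsLRComodHom Q B₀ q ∧ K Q B₀ q ∧ q ≫ B₀.co = h) ∧
            ∀ q', (IsLRComodHom Q B₀ q' ∧ K Q B₀ q' ∧ q' ≫ B₀.co = h) → q' = q) →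
      ∃ ϱ : L.obj (R.obj B₀.pt) ⟶ B₀.pt,
        (K (cofreeLR L R η B₀.pt) B₀ ϱ ∧
          L.map (R.map ϱ) ≫ ϱ = L.map (εt.app (R.obj B₀.pt)) ≫ ϱ ∧
          L.map (η.app (R.obj B₀.pt)) ≫ L.map (R.map ϱ) = ϱ ≫ B₀.co ∧
          L.map (R.map B₀.co) ≫ L.map (εt.app (R.obj B₀.pt)) = ϱ ≫ B₀.co) ∧
        ∀ ϱ', (K (cofreeLR L R η B₀.pt) B₀ ϱ' ∧
          L.map (R.map ϱ') ≫ ϱ' = L.map (εt.app (R.obj B₀.pt)) ≫ ϱ' ∧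
          L.map (η.app (R.obj B₀.pt)) ≫ L.map (R.map ϱ') = ϱ' ≫ B₀.co ∧
          L.map (R.map B₀.co) ≫ L.map (εt.app (R.obj B₀.pt)) = ϱ' ≫ B₀.co) → ϱ' = ϱ) ∧
    -- (2) comodule morphisms between K-cofirm comodules are bimodule morphisms
    (∀ (B₀ B₁ : LRComod L R η)
      (ϱ₀ : L.obj (R.obj B₀.pt) ⟶ B₀.pt) (ϱ₁ : L.obj (R.obj B₁.pt) ⟶ B₁.pt),
      (K B₀ (cofreeLR L R η B₀.pt) B₀.co ∧
        ∀ (Q : LRComod L R η) (h : Q.pt ⟶ L.obj (R.obj B₀.pt)),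
          IsLRComodHom Q (cofreeLR L R η B₀.pt) h →
          K Q (cofreeLR L R η B₀.pt) h →
          h ≫ L.map (η.app (R.obj B₀.pt)) = h ≫ L.map (R.map B₀.co) →
          ∃ q : Q.pt ⟶ B₀.pt,
            (IsLRComodHom Q B₀ q ∧ K Q B₀ q ∧ q ≫ B₀.co = h) ∧
            ∀ q', (IsLRComodHom Q B₀ q' ∧ K Q B₀ q' ∧ q' ≫ B₀.co = h) → q' = q) →
      (K B₁ (cofreeLR L R η B₁.pt) B₁.co ∧
        ∀ (Q : LRComod L R η) (h : Q.pt ⟶ L.obj (R.obj B₁.pt)),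
          IsLRComodHom Q (cofreeLR L R η B₁.pt) h →
          K Q (cofreeLR L R η B₁.pt) h →
          h ≫ L.map (η.app (R.obj B₁.pt)) = h ≫ L.map (R.map B₁.co) →
          ∃ q : Q.pt ⟶ B₁.pt,
            (IsLRComodHom Q B₁ q ∧ K Q B₁ q ∧ q ≫ B₁.co = h) ∧
            ∀ q', (IsLRComodHom Q B₁ q' ∧ K Q B₁ q' ∧ q' ≫ B₁.co = h) → q' = q) →
      (K (cofreeLR L R η B₀.pt) B₀ ϱ₀ ∧
        L.map (η.app (R.obj B₀.pt)) ≫ L.map (R.map ϱ₀) = ϱ₀ ≫ B₀.co ∧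
        L.map (R.map B₀.co) ≫ L.map (εt.app (R.obj B₀.pt)) = ϱ₀ ≫ B₀.co) →
      (K (cofreeLR L R η B₁.pt) B₁ ϱ₁ ∧
        L.map (η.app (R.obj B₁.pt)) ≫ L.map (R.map ϱ₁) = ϱ₁ ≫ B₁.co ∧
        L.map (R.map B₁.co) ≫ L.map (εt.app (R.obj B₁.pt)) = ϱ₁ ≫ B₁.co) →
      ∀ h : B₀.pt ⟶ B₁.pt, IsLRComodHom B₀ B₁ h →
        L.map (R.map h) ≫ ϱ₁ = ϱ₀ ≫ h) := by
  constructor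
  · -- Part (1)
    rintro B₀ ⟨hKω, hU⟩
    have n1 : R.map (L.map (R.map B₀.co)) ≫ εt.app (R.obj (L.obj (R.obj B₀.pt)))
        = εt.app (R.obj B₀.pt) ≫ R.map B₀.co := εt.naturality (R.map B₀.co)
    have n2 : R.map (L.map (η.app (R.obj B₀.pt))) ≫ εt.app (R.obj (L.obj (R.obj B₀.pt)))
        = εt.app (R.obj B₀.pt) ≫ η.app (R.obj B₀.pt) := εt.naturality (η.app (R.obj B₀.pt))
    have n3 : R.map (L.map (εt.app (R.obj B₀.pt))) ≫ εt.app (R.obj B₀.pt)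
        = εt.app (R.obj (L.obj (R.obj B₀.pt))) ≫ εt.app (R.obj B₀.pt) :=
      εt.naturality (εt.app (R.obj B₀.pt))
    obtain ⟨ϱ, ⟨ϱhom, ϱK, ϱω⟩, ϱuniq⟩ :=
      hU (cofreeLR L R η B₀.pt)
        (L.map (R.map B₀.co) ≫ L.map (εt.app (R.obj B₀.pt)))
        (myHomComp (myMapHom B₀.co) (myEtHom εt B₀.pt))
        (Kideal _ _ _ _ _ (myMapHom B₀.co) (myEtHom εt B₀.pt) (Or.inr (Kεt B₀.pt)))
        (by
          calc (L.map (R.map B₀.co) ≫ L.map (εt.app (R.obj B₀.pt)))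
                  ≫ L.map (η.app (R.obj B₀.pt))
              = L.map (R.map B₀.co ≫ εt.app (R.obj B₀.pt) ≫ η.app (R.obj B₀.pt)) := by
                rw [L.map_comp, L.map_comp, Category.assoc]
            _ = L.map (R.map B₀.co ≫ R.map (L.map (η.app (R.obj B₀.pt)))
                  ≫ εt.app (R.obj (L.obj (R.obj B₀.pt)))) := by rw [← n2]
            _ = L.map (R.map (B₀.co ≫ L.map (η.app (R.obj B₀.pt)))
                  ≫ εt.app (R.obj (L.obj (R.obj B₀.pt)))) := by
                rw [R.map_comp, Category.assoc]
            _ = L.map (R.map (B₀.co ≫ L.map (R.map B₀.co))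
                  ≫ εt.app (R.obj (L.obj (R.obj B₀.pt)))) := by rw [B₀.coassoc]
            _ = L.map (R.map B₀.co ≫ R.map (L.map (R.map B₀.co))
                  ≫ εt.app (R.obj (L.obj (R.obj B₀.pt)))) := by
                rw [R.map_comp, Category.assoc]
            _ = L.map (R.map B₀.co ≫ εt.app (R.obj B₀.pt) ≫ R.map B₀.co) := by rw [n1]
            _ = (L.map (R.map B₀.co) ≫ L.map (εt.app (R.obj B₀.pt)))
                  ≫ L.map (R.map B₀.co) := by
                rw [L.map_comp, L.map_comp, Category.assoc])
    change L.obj (R.obj B₀.pt) ⟶ B₀.pt at ϱ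
    change ϱ ≫ B₀.co = L.map (R.map B₀.co) ≫ L.map (εt.app (R.obj B₀.pt)) at ϱω
    have e2 : (L.map (R.map ϱ) ≫ ϱ) ≫ B₀.co
        = (L.map (εt.app (R.obj B₀.pt)) ≫ ϱ) ≫ B₀.co := by
      calc (L.map (R.map ϱ) ≫ ϱ) ≫ B₀.co
          = L.map (R.map ϱ) ≫ (L.map (R.map B₀.co) ≫ L.map (εt.app (R.obj B₀.pt))) := by
            rw [Category.assoc, ϱω]
        _ = L.map (R.map ϱ ≫ R.map B₀.co ≫ εt.app (R.obj B₀.pt)) := by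
            rw [L.map_comp, L.map_comp]
        _ = L.map (R.map (ϱ ≫ B₀.co) ≫ εt.app (R.obj B₀.pt)) := by
            rw [R.map_comp, Category.assoc]
        _ = L.map (R.map (L.map (R.map B₀.co) ≫ L.map (εt.app (R.obj B₀.pt)))
              ≫ εt.app (R.obj B₀.pt)) := by rw [ϱω]
        _ = L.map (R.map (L.map (R.map B₀.co)) ≫ R.map (L.map (εt.app (R.obj B₀.pt)))
              ≫ εt.app (R.obj B₀.pt)) := by rw [R.map_comp, Category.assoc]
        _ = L.map (R.map (L.map (R.map B₀.co)) ≫ εt.app (R.obj (L.obj (R.obj B₀.pt)))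
              ≫ εt.app (R.obj B₀.pt)) := by rw [n3]
        _ = L.map (εt.app (R.obj B₀.pt) ≫ R.map B₀.co ≫ εt.app (R.obj B₀.pt)) := by
            rw [← Category.assoc, n1, Category.assoc]
        _ = (L.map (εt.app (R.obj B₀.pt)) ≫ ϱ) ≫ B₀.co := by
            rw [L.map_comp, L.map_comp, ← ϱω, ← Category.assoc]
    refine ⟨ϱ, ⟨ϱK, ?_, ϱhom, ϱω.symm⟩, ?_⟩
    · exact myUnique K Kideal B₀ hU (cofreeLR L R η (L.obj (R.obj B₀.pt)))
        (L.map (R.map ϱ) ≫ ϱ) (L.map (εt.app (R.obj B₀.pt)) ≫ ϱ)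
        (myHomComp (myMapHom ϱ) ϱhom) (myHomComp (myEtHom εt B₀.pt) ϱhom)
        (Kideal _ _ _ _ _ (myMapHom ϱ) ϱhom (Or.inr ϱK))
        (Kideal _ _ _ _ _ (myEtHom εt B₀.pt) ϱhom (Or.inr ϱK))
        e2
    · rintro ϱ' ⟨k', -, hom', comp'⟩
      exact ϱuniq ϱ' ⟨hom', k', comp'.symm⟩
  · -- Part (2)
    rintro B₀ B₁ ϱ₀ ϱ₁ ⟨hKω₀, hU₀⟩ ⟨hKω₁, hU₁⟩ ⟨k₀, hom₀, fr₀⟩ ⟨k₁, hom₁, fr₁⟩ h hhom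
    have hh : B₀.co ≫ L.map (R.map h) = h ≫ B₁.co := hhom
    have hom₀' : IsLRComodHom (cofreeLR L R η B₀.pt) B₀ ϱ₀ := hom₀
    have hom₁' : IsLRComodHom (cofreeLR L R η B₁.pt) B₁ ϱ₁ := hom₁
    have n4 : R.map (L.map (R.map h)) ≫ εt.app (R.obj B₁.pt)
        = εt.app (R.obj B₀.pt) ≫ R.map h := εt.naturality (R.map h)
    have e : (L.map (R.map h) ≫ ϱ₁) ≫ B₁.co = (ϱ₀ ≫ h) ≫ B₁.co := by
      calc (L.map (R.map h) ≫ ϱ₁) ≫ B₁.co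
          = L.map (R.map h) ≫ (L.map (R.map B₁.co) ≫ L.map (εt.app (R.obj B₁.pt))) := by
            rw [Category.assoc, ← fr₁]
        _ = L.map (R.map (h ≫ B₁.co) ≫ εt.app (R.obj B₁.pt)) := by
            rw [L.map_comp, R.map_comp, L.map_comp, Category.assoc]
        _ = L.map (R.map (B₀.co ≫ L.map (R.map h)) ≫ εt.app (R.obj B₁.pt)) := by
            rw [hh]
        _ = L.map (R.map B₀.co ≫ R.map (L.map (R.map h)) ≫ εt.app (R.obj B₁.pt)) := by
            rw [R.map_comp, Category.assoc]
        _ = L.map (R.map B₀.co ≫ εt.app (R.obj B₀.pt) ≫ R.map h) := by rw [n4]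
        _ = (L.map (R.map B₀.co) ≫ L.map (εt.app (R.obj B₀.pt))) ≫ L.map (R.map h) := by
            rw [L.map_comp, L.map_comp, Category.assoc]
        _ = (ϱ₀ ≫ B₀.co) ≫ L.map (R.map h) := by rw [fr₀]
        _ = (ϱ₀ ≫ h) ≫ B₁.co := by rw [Category.assoc, hh, ← Category.assoc]
    exact myUnique K Kideal B₁ hU₁ (cofreeLR L R η B₀.pt)
      (L.map (R.map h) ≫ ϱ₁) (ϱ₀ ≫ h)
      (myHomComp (myMapHom h) hom₁') (myHomComp hom₀' hhom)
      (Kideal _ _ _ _ _ (myMapHom h) hom₁' (Or.inr k₁))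
      (Kideal _ _ _ _ _ hom₀' hhom (Or.inl k₀))
      e

end
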